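/- The coefficient of x^{4k} y^{4k} in f_1(x,y) = (x-α_0) ∏_{j=1}^{2k} (x-α_j)(y-β_j)(x-y-γ_j)(x+y-δ_j) equals (-1)^k [ binomial(2k,k) * Σ_{j=0}^{2k} (-α_j) + binomial(2k-1,k-1) * Σ_{j=1}^{2k} (-γ_j) + binomial(2k-1,k-1) * Σ_{j=1}^{2k} (-δ_j) ]. -/

import Mathlib

open MvPolynomial Finset

lemma degE (d : Fin 2 →₀ ℕ) : ∑ i ∈ d.support, d i = d 0 + d 1 := by
  rw [Finset.sum_subset (Finset.subset_univ d.support)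
    (fun i _ hi => Finsupp.notMem_support_iff.mp hi), Fin.sum_univ_two]

lemma decomp {ι : Type} [DecidableEq ι] (L : ι → MvPolynomial (Fin 2) ℝ) (e : ι → ℝ)
    (s : Finset ι) (hL : ∀ i ∈ s, (L i).totalDegree ≤ 1) :
    ∃ R : MvPolynomial (Fin 2) ℝ,
      (∏ i ∈ s, (L i + C (e i)))
        = ∏ i ∈ s, L i + (∑ i ∈ s, C (e i) * ∏ j ∈ s.erase i, L j) + R ∧
      ∀ d : Fin 2 →₀ ℕ, s.card ≤ d 0 + d 1 + 1 → coeff d R = 0 := by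
  classical
  induction s using Finset.induction_on with
  | empty => exact ⟨0, by simp, fun d _ => by simp⟩
  | @insert a s ha ih =>
    obtain ⟨R, hR, hRc⟩ := ih (fun i hi => hL i (mem_insert_of_mem hi))
    have hLa : (L a).totalDegree ≤ 1 := hL a (mem_insert_self a s)
    refine ⟨L a * R + C (e a) * (∑ i ∈ s, C (e i) * ∏ j ∈ s.erase i, L j)
        + C (e a) * R, ?_, ?_⟩
    · rw [prod_insert ha, prod_insert ha, hR, sum_insert ha, erase_insert ha]
      have hsum : ∑ i ∈ s, C (e i) * ∏ j ∈ (insert a s).erase i, L j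
          = L a * ∑ i ∈ s, C (e i) * ∏ j ∈ s.erase i, L j := by
        rw [Finset.mul_sum]
        refine Finset.sum_congr rfl fun i hi => ?_
        have hia : i ≠ a := fun h => ha (h ▸ hi)
        rw [Finset.erase_insert_of_ne (Ne.symm hia),
          Finset.prod_insert (fun h => ha (Finset.mem_of_mem_erase h))]
        ring
      rw [hsum]; ring
    · intro d hd
      rw [coeff_add, coeff_add]
      have hcard : s.card + 1 ≤ d 0 + d 1 + 1 := by
        rwa [Finset.card_insert_of_notMem ha] at hd
      have h1 : coeff d (L a * R) = 0 := by
        rw [coeff_mul]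
        refine Finset.sum_eq_zero fun p hp => ?_
        rw [Finset.HasAntidiagonal.mem_antidiagonal] at hp
        have hpd0 : p.1 0 + p.2 0 = d 0 := by
          have := DFunLike.congr_fun hp (0 : Fin 2); simpa using this
        have hpd1 : p.1 1 + p.2 1 = d 1 := by
          have := DFunLike.congr_fun hp (1 : Fin 2); simpa using this
        by_cases hu : p.1 0 + p.1 1 ≤ 1
        · have : coeff p.2 R = 0 := hRc p.2 (by omega)
          rw [this, mul_zero]
        · have : coeff p.1 (L a) = 0 := by
            apply coeff_eq_zero_of_totalDegree_lt
            rw [degE]; omega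
          rw [this, zero_mul]
      have h2 : coeff d (C (e a) * ∑ i ∈ s, C (e i) * ∏ j ∈ s.erase i, L j) = 0 := by
        rw [coeff_C_mul, coeff_sum]
        have : ∀ i ∈ s, coeff d (C (e i) * ∏ j ∈ s.erase i, L j) = 0 := by
          intro i hi
          rw [coeff_C_mul]
          have hdeg : (∏ j ∈ s.erase i, L j).totalDegree ≤ s.card - 1 := by
            refine (totalDegree_finset_prod _ _).trans ?_
            calc ∑ j ∈ s.erase i, (L j).totalDegree
                ≤ ∑ j ∈ s.erase i, 1 :=
                  Finset.sum_le_sum fun j hj =>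
                    hL j (mem_insert_of_mem (Finset.mem_of_mem_erase hj))
              _ = (s.erase i).card := by simp
              _ = s.card - 1 := by rw [Finset.card_erase_of_mem hi]
          have hcs : 1 ≤ s.card := Finset.card_pos.mpr ⟨i, hi⟩
          have : coeff d (∏ j ∈ s.erase i, L j) = 0 := by
            apply coeff_eq_zero_of_totalDegree_lt
            rw [degE]; omega
          rw [this, mul_zero]
        rw [Finset.sum_eq_zero this, mul_zero]
      have h3 : coeff d (C (e a) * R) = 0 := by
        rw [coeff_C_mul, hRc d (by omega), mul_zero]
      rw [h1, h2, h3]; ring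

lemma coeffXX (a b p q : ℕ) :
    coeff (Finsupp.single 0 a + Finsupp.single 1 b)
      ((X 0 : MvPolynomial (Fin 2) ℝ) ^ p * X 1 ^ q)
      = if p = a ∧ q = b then 1 else 0 := by
  rw [X_pow_eq_monomial, X_pow_eq_monomial, monomial_mul, mul_one, coeff_monomial]
  congr 1
  simp only [eq_iff_iff]
  constructor
  · intro h
    exact ⟨by simpa using DFunLike.congr_fun h (0 : Fin 2),
      by simpa using DFunLike.congr_fun h (1 : Fin 2)⟩
  · rintro ⟨rfl, rfl⟩; rfl

lemma coeffE (A B a b n : ℕ) :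
    coeff (Finsupp.single 0 A + Finsupp.single 1 B)
      ((X 0 : MvPolynomial (Fin 2) ℝ) ^ a * X 1 ^ b * ((X 0) ^ 2 - (X 1) ^ 2) ^ n)
      = ∑ m ∈ range (n + 1), (-1 : ℝ) ^ (m + n) * (n.choose m : ℝ) *
          (if a + 2 * m = A ∧ b + 2 * (n - m) = B then 1 else 0) := by
  rw [sub_pow, Finset.mul_sum, coeff_sum]
  refine Finset.sum_congr rfl fun m hm => ?_
  have hterm : (X 0 : MvPolynomial (Fin 2) ℝ) ^ a * X 1 ^ b *
      ((-1) ^ (m + n) * ((X 0) ^ 2) ^ m * ((X 1) ^ 2) ^ (n - m) * (n.choose m : MvPolynomial (Fin 2) ℝ))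
      = C ((-1 : ℝ) ^ (m + n) * (n.choose m : ℝ)) * (X 0 ^ (a + 2 * m) * X 1 ^ (b + 2 * (n - m))) := by
    rw [map_mul, ← C_eq_coe_nat, map_pow, map_neg, map_one]
    ring
  rw [hterm, coeff_C_mul, coeffXX]

-- c0
lemma c0 (k : ℕ) (hk : 1 ≤ k) :
    coeff (Finsupp.single 0 (4 * k) + Finsupp.single 1 (4 * k))
      ((X 0 : MvPolynomial (Fin 2) ℝ) ^ (2 * k) * X 1 ^ (2 * k) * ((X 0) ^ 2 - (X 1) ^ 2) ^ (2 * k))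
      = (-1 : ℝ) ^ k * ((2 * k).choose k : ℝ) := by
  rw [coeffE]
  rw [Finset.sum_eq_single k]
  · rw [if_pos (by omega)]
    rw [show k + 2 * k = k + 2 * k from rfl, pow_add, pow_mul]
    norm_num
  · intro m _ hm
    rw [if_neg (by omega), mul_zero]
  · intro h
    exact absurd (Finset.mem_range.mpr (by omega)) h

-- c1 : β contributions vanish
lemma c1 (k : ℕ) (hk : 1 ≤ k) :
    coeff (Finsupp.single 0 (4 * k) + Finsupp.single 1 (4 * k))
      ((X 0 : MvPolynomial (Fin 2) ℝ) ^ (2 * k + 1) * X 1 ^ (2 * k - 1) * ((X 0) ^ 2 - (X 1) ^ 2) ^ (2 * k))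
      = 0 := by
  rw [coeffE]
  refine Finset.sum_eq_zero fun m _ => ?_
  rw [if_neg (by omega), mul_zero]

-- even-power X0 with odd needed : vanish (top term)
lemma ctop (k : ℕ) (hk : 1 ≤ k) :
    coeff (Finsupp.single 0 (4 * k) + Finsupp.single 1 (4 * k))
      ((X 0 : MvPolynomial (Fin 2) ℝ) ^ (2 * k + 1) * X 1 ^ (2 * k) * ((X 0) ^ 2 - (X 1) ^ 2) ^ (2 * k))
      = 0 := by
  rw [coeffE]
  refine Finset.sum_eq_zero fun m _ => ?_
  rw [if_neg (by omega), mul_zero]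

lemma codd (k : ℕ) (hk : 1 ≤ k) :
    coeff (Finsupp.single 0 (4 * k) + Finsupp.single 1 (4 * k))
      ((X 0 : MvPolynomial (Fin 2) ℝ) ^ (2 * k + 1) * X 1 ^ (2 * k + 1) * ((X 0) ^ 2 - (X 1) ^ 2) ^ (2 * k - 1))
      = 0 := by
  rw [coeffE]
  refine Finset.sum_eq_zero fun m _ => ?_
  rw [if_neg (by omega), mul_zero]

lemma c2 (k : ℕ) (hk : 1 ≤ k) :
    coeff (Finsupp.single 0 (4 * k) + Finsupp.single 1 (4 * k))
      ((X 0 : MvPolynomial (Fin 2) ℝ) ^ (2 * k + 2) * X 1 ^ (2 * k) * ((X 0) ^ 2 - (X 1) ^ 2) ^ (2 * k - 1))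
      = (-1 : ℝ) ^ k * ((2 * k - 1).choose (k - 1) : ℝ) := by
  rw [coeffE]
  rw [Finset.sum_eq_single (k - 1)]
  · rw [if_pos (by omega)]
    rw [show k - 1 + (2 * k - 1) = k + 2 * (k - 1) by omega, pow_add, pow_mul]
    norm_num
  · intro m _ hm
    rw [if_neg (by omega), mul_zero]
  · intro h
    exact absurd (Finset.mem_range.mpr (by omega)) h
theorem stmt_3 (k : ℕ) (hk : 1 ≤ k) (α β γ δ : ℕ → ℝ) :
    MvPolynomial.coeff (Finsupp.single 0 (4 * k) + Finsupp.single 1 (4 * k))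
      ((X 0 - C (α 0)) *
       ∏ j ∈ Finset.Icc 1 (2 * k),
         (X 0 - C (α j)) * (X 1 - C (β j)) * (X 0 - X 1 - C (γ j)) * (X 0 + X 1 - C (δ j)) :
        MvPolynomial (Fin 2) ℝ)
      = (-1 : ℝ) ^ k *
        ((Nat.choose (2 * k) k : ℝ) * ∑ j ∈ Finset.Icc 0 (2 * k), (-(α j)) +
         (Nat.choose (2 * k - 1) (k - 1) : ℝ) * ∑ j ∈ Finset.Icc 1 (2 * k), (-(γ j)) +
         (Nat.choose (2 * k - 1) (k - 1) : ℝ) * ∑ j ∈ Finset.Icc 1 (2 * k), (-(δ j))) := by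
  classical
  set d : Fin 2 →₀ ℕ := Finsupp.single 0 (4 * k) + Finsupp.single 1 (4 * k) with hd
  have hd0 : d 0 = 4 * k := by simp [hd]
  have hd1 : d 1 = 4 * k := by simp [hd]
  set L : ℕ × Fin 4 → MvPolynomial (Fin 2) ℝ :=
    fun i => ![X 0, X 1, X 0 - X 1, X 0 + X 1] i.2 with hLdef
  set e : ℕ × Fin 4 → ℝ :=
    fun i => ![-(α i.1), -(β i.1), -(γ i.1), -(δ i.1)] i.2 with hedef
  set grid : Finset (ℕ × Fin 4) := (Finset.Icc 1 (2 * k)) ×ˢ (Finset.univ : Finset (Fin 4))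
    with hgrid
  have h0g : ((0 : ℕ), (0 : Fin 4)) ∉ grid := by
    simp [hgrid, Finset.mem_product]
  set s : Finset (ℕ × Fin 4) := insert ((0 : ℕ), (0 : Fin 4)) grid with hs
  have hcards : s.card = 8 * k + 1 := by
    rw [hs, Finset.card_insert_of_notMem h0g, hgrid, Finset.card_product]
    simp; omega
  -- the polynomial equals the structured product
  have hpoly : ((X 0 - C (α 0)) *
       ∏ j ∈ Finset.Icc 1 (2 * k),
         (X 0 - C (α j)) * (X 1 - C (β j)) * (X 0 - X 1 - C (γ j)) * (X 0 + X 1 - C (δ j)) :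
        MvPolynomial (Fin 2) ℝ) = ∏ i ∈ s, (L i + C (e i)) := by
    rw [hs, Finset.prod_insert h0g, hgrid, Finset.prod_product]
    congr 1
    · simp [hLdef, hedef, sub_eq_add_neg]
    · refine Finset.prod_congr rfl fun j hj => ?_
      rw [Fin.prod_univ_four]
      simp [hLdef, hedef, sub_eq_add_neg]
  have hE : ((X 0 : MvPolynomial (Fin 2) ℝ) - X 1) * (X 0 + X 1) = X 0 ^ 2 - X 1 ^ 2 := by
    ring
  have hgridL : ∏ i ∈ grid, L i
      = (X 0 : MvPolynomial (Fin 2) ℝ) ^ (2*k) * X 1 ^ (2*k) * ((X 0)^2 - (X 1)^2) ^ (2*k) := by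
    rw [hgrid, Finset.prod_product]
    have h1 : ∀ j ∈ Finset.Icc 1 (2*k), (∏ t : Fin 4, L (j, t))
        = (X 0 : MvPolynomial (Fin 2) ℝ) * (X 1 * ((X 0)^2 - (X 1)^2)) := by
      intro j _
      rw [Fin.prod_univ_four]
      simp only [hLdef]
      rw [← hE]; ring_nf
      simp [Matrix.cons_val_one, Matrix.head_cons]
      ring
    rw [Finset.prod_congr rfl h1, Finset.prod_const, Nat.card_Icc]
    simp only [show 2*k + 1 - 1 = 2*k by omega]
    rw [mul_pow, mul_pow]; ring
  have hsL : ∏ i ∈ s, L i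
      = (X 0 : MvPolynomial (Fin 2) ℝ) ^ (2*k+1) * X 1 ^ (2*k) * ((X 0)^2 - (X 1)^2) ^ (2*k) := by
    rw [hs, Finset.prod_insert h0g, hgridL]
    have h2 : L ((0:ℕ), (0:Fin 4)) = X 0 := by simp [hLdef]
    rw [h2, pow_succ]; ring
  have hLdeg : ∀ i ∈ s, (L i).totalDegree ≤ 1 := by
    rintro ⟨j, t⟩ -
    fin_cases t
    · simp [hLdef, totalDegree_X]
    · simp [hLdef, totalDegree_X]
    · simp only [hLdef]
      refine le_trans (totalDegree_sub _ _) ?_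
      simp [totalDegree_X]
    · simp only [hLdef]
      refine le_trans (totalDegree_add _ _) ?_
      simp [totalDegree_X]
  obtain ⟨R, hReq, hRc⟩ := decomp L e s hLdeg
  rw [hpoly, hReq, coeff_add, coeff_add]
  have hRz : coeff d R = 0 := hRc d (by rw [hd0, hd1, hcards]; omega)
  have htopz : coeff d (∏ i ∈ s, L i) = 0 := by rw [hsL, hd]; exact ctop k hk
  rw [hRz, htopz, coeff_sum]
  -- nonzero linear forms
  have hx0 : (X 0 : MvPolynomial (Fin 2) ℝ) ≠ 0 := X_ne_zero 0
  have hx1 : (X 1 : MvPolynomial (Fin 2) ℝ) ≠ 0 := X_ne_zero 1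
  have hxs : (X 0 - X 1 : MvPolynomial (Fin 2) ℝ) ≠ 0 := by
    intro h
    have h2 := congrArg (coeff (Finsupp.single 0 1)) h
    simp [coeff_X', Finsupp.single_eq_single_iff] at h2
  have hxa : (X 0 + X 1 : MvPolynomial (Fin 2) ℝ) ≠ 0 := by
    intro h
    have h2 := congrArg (coeff (Finsupp.single 0 1)) h
    simp [coeff_X', Finsupp.single_eq_single_iff] at h2
  set c0v : ℝ := (-1 : ℝ) ^ k * ((2 * k).choose k : ℝ) with hc0v
  set c2v : ℝ := (-1 : ℝ) ^ k * ((2 * k - 1).choose (k - 1) : ℝ) with hc2v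
  have hmemg : ∀ j ∈ Finset.Icc 1 (2 * k), ∀ t : Fin 4, (j, t) ∈ s := by
    intro j hj t
    refine Finset.mem_insert_of_mem ?_
    rw [hgrid]; exact Finset.mem_product.mpr ⟨hj, Finset.mem_univ _⟩
  have herase0 : ∀ j ∈ Finset.Icc 1 (2 * k),
      coeff d (∏ i ∈ s.erase (j, (0 : Fin 4)), L i) = c0v := by
    intro j hj
    have hkey := Finset.mul_prod_erase s L (hmemg j hj 0)
    rw [hsL] at hkey
    have hL0 : L (j, (0 : Fin 4)) = X 0 := by simp [hLdef]
    rw [hL0] at hkey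
    have hQ : ∏ i ∈ s.erase (j, (0 : Fin 4)), L i
        = (X 0 : MvPolynomial (Fin 2) ℝ) ^ (2*k) * X 1 ^ (2*k) * ((X 0)^2 - (X 1)^2) ^ (2*k) := by
      apply mul_left_cancel₀ hx0
      rw [hkey, pow_succ]; ring
    rw [hQ, hd, hc0v]
    exact c0 k hk
  have herase1 : ∀ j ∈ Finset.Icc 1 (2 * k),
      coeff d (∏ i ∈ s.erase (j, (1 : Fin 4)), L i) = 0 := by
    intro j hj
    have hkey := Finset.mul_prod_erase s L (hmemg j hj 1)
    rw [hsL] at hkey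
    have hL1 : L (j, (1 : Fin 4)) = X 1 := by simp [hLdef]
    rw [hL1] at hkey
    have hQ : ∏ i ∈ s.erase (j, (1 : Fin 4)), L i
        = (X 0 : MvPolynomial (Fin 2) ℝ) ^ (2*k+1) * X 1 ^ (2*k-1) * ((X 0)^2 - (X 1)^2) ^ (2*k) := by
      apply mul_left_cancel₀ hx1
      rw [hkey, show (X 1 : MvPolynomial (Fin 2) ℝ)^(2*k) = X 1 ^(2*k-1) * X 1 by
        rw [← pow_succ]; congr 1; omega]
      ring
    rw [hQ, hd]
    exact c1 k hk
  have herase2 : ∀ j ∈ Finset.Icc 1 (2 * k),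
      coeff d (∏ i ∈ s.erase (j, (2 : Fin 4)), L i) = c2v := by
    intro j hj
    have hkey := Finset.mul_prod_erase s L (hmemg j hj 2)
    rw [hsL] at hkey
    have hL2 : L (j, (2 : Fin 4)) = X 0 - X 1 := by simp [hLdef]
    rw [hL2] at hkey
    have hQ : ∏ i ∈ s.erase (j, (2 : Fin 4)), L i
        = (X 0 : MvPolynomial (Fin 2) ℝ) ^ (2*k+1) * X 1 ^ (2*k)
          * ((X 0)^2 - (X 1)^2) ^ (2*k-1) * (X 0 + X 1) := by
      apply mul_left_cancel₀ hxs
      rw [hkey, show ((X 0 : MvPolynomial (Fin 2) ℝ)^2 - (X 1)^2)^(2*k)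
          = ((X 0)^2 - (X 1)^2)^(2*k-1) * ((X 0)^2 - (X 1)^2) by
        rw [← pow_succ]; congr 1; omega, ← hE]
      ring
    have hsplit : (X 0 : MvPolynomial (Fin 2) ℝ) ^ (2*k+1) * X 1 ^ (2*k)
          * ((X 0)^2 - (X 1)^2) ^ (2*k-1) * (X 0 + X 1)
        = X 0 ^ (2*k+2) * X 1 ^ (2*k) * ((X 0)^2 - (X 1)^2) ^ (2*k-1)
          + X 0 ^ (2*k+1) * X 1 ^ (2*k+1) * ((X 0)^2 - (X 1)^2) ^ (2*k-1) := by
      ring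
    rw [hQ, hsplit, coeff_add, hd, c2 k hk, codd k hk, add_zero, hc2v]
  have herase3 : ∀ j ∈ Finset.Icc 1 (2 * k),
      coeff d (∏ i ∈ s.erase (j, (3 : Fin 4)), L i) = c2v := by
    intro j hj
    have hkey := Finset.mul_prod_erase s L (hmemg j hj 3)
    rw [hsL] at hkey
    have hL3 : L (j, (3 : Fin 4)) = X 0 + X 1 := by simp [hLdef]
    rw [hL3] at hkey
    have hQ : ∏ i ∈ s.erase (j, (3 : Fin 4)), L i
        = (X 0 : MvPolynomial (Fin 2) ℝ) ^ (2*k+1) * X 1 ^ (2*k)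
          * ((X 0)^2 - (X 1)^2) ^ (2*k-1) * (X 0 - X 1) := by
      apply mul_left_cancel₀ hxa
      rw [hkey, show ((X 0 : MvPolynomial (Fin 2) ℝ)^2 - (X 1)^2)^(2*k)
          = ((X 0)^2 - (X 1)^2)^(2*k-1) * ((X 0)^2 - (X 1)^2) by
        rw [← pow_succ]; congr 1; omega, ← hE]
      ring
    have hsplit : (X 0 : MvPolynomial (Fin 2) ℝ) ^ (2*k+1) * X 1 ^ (2*k)
          * ((X 0)^2 - (X 1)^2) ^ (2*k-1) * (X 0 - X 1)
        = X 0 ^ (2*k+2) * X 1 ^ (2*k) * ((X 0)^2 - (X 1)^2) ^ (2*k-1)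
          - X 0 ^ (2*k+1) * X 1 ^ (2*k+1) * ((X 0)^2 - (X 1)^2) ^ (2*k-1) := by
      ring
    rw [hQ, hsplit, coeff_sub, hd, c2 k hk, codd k hk, sub_zero, hc2v]
  set F : ℕ × Fin 4 → ℝ := fun i => coeff d (C (e i) * ∏ x ∈ s.erase i, L x) with hF
  have h1 : ∑ i ∈ s, F i = F ((0:ℕ), (0:Fin 4)) + ∑ i ∈ grid, F i := by
    rw [hs]; exact Finset.sum_insert h0g
  have h2 : ∑ i ∈ grid, F i
      = ∑ j ∈ Finset.Icc 1 (2*k), (F (j, 0) + F (j, 1) + F (j, 2) + F (j, 3)) := by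
    rw [hgrid, Finset.sum_product]
    exact Finset.sum_congr rfl fun j _ => Fin.sum_univ_four _
  have hF00 : F ((0:ℕ), (0:Fin 4)) = (-(α 0)) * c0v := by
    rw [hF]
    show coeff d (C (e ((0:ℕ), (0:Fin 4))) * ∏ x ∈ s.erase ((0:ℕ), (0:Fin 4)), L x)
      = (-(α 0)) * c0v
    rw [coeff_C_mul, hs, Finset.erase_insert h0g, hgridL, hd, hc0v]
    rw [c0 k hk]
    simp [hedef]
  have hFj : ∀ j ∈ Finset.Icc 1 (2*k),
      F (j, 0) + F (j, 1) + F (j, 2) + F (j, 3)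
        = (-(α j)) * c0v + ((-(γ j)) * c2v + (-(δ j)) * c2v) := by
    intro j hj
    have e0 : F (j, (0:Fin 4)) = (-(α j)) * c0v := by
      rw [hF]
      show coeff d (C (e (j, (0:Fin 4))) * ∏ x ∈ s.erase (j, (0:Fin 4)), L x) = _
      rw [coeff_C_mul, herase0 j hj]
      simp [hedef]
    have e1 : F (j, (1:Fin 4)) = 0 := by
      rw [hF]
      show coeff d (C (e (j, (1:Fin 4))) * ∏ x ∈ s.erase (j, (1:Fin 4)), L x) = _
      rw [coeff_C_mul, herase1 j hj, mul_zero]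
    have e2 : F (j, (2:Fin 4)) = (-(γ j)) * c2v := by
      rw [hF]
      show coeff d (C (e (j, (2:Fin 4))) * ∏ x ∈ s.erase (j, (2:Fin 4)), L x) = _
      rw [coeff_C_mul, herase2 j hj]
      simp [hedef]
    have e3 : F (j, (3:Fin 4)) = (-(δ j)) * c2v := by
      rw [hF]
      show coeff d (C (e (j, (3:Fin 4))) * ∏ x ∈ s.erase (j, (3:Fin 4)), L x) = _
      rw [coeff_C_mul, herase3 j hj]
      simp [hedef]
    rw [e0, e1, e2, e3]; ring
  rw [h1, h2, Finset.sum_congr rfl hFj, hF00]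
  rw [Finset.sum_add_distrib, Finset.sum_add_distrib, ← Finset.sum_mul, ← Finset.sum_mul,
    ← Finset.sum_mul]
  rw [show Finset.Icc 0 (2*k) = insert 0 (Finset.Icc 1 (2*k)) by
    ext x; simp [Finset.mem_Icc, Finset.mem_insert]; omega]
  rw [Finset.sum_insert (by simp)]
  rw [hc0v, hc2v]
  ring
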